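/- Let G₁ and G₂ be groups and let φ : G₁ ≃* G₁ be an automorphism of G₁ with φ(g) ≠ g for every g ∈ G₁ with g ≠ 1. Let Φ : G₁ ∗ G₂ →* G₁ ∗ G₂ be the endomorphism of the free product induced by φ on the first factor and the identity on the second factor (i.e. Φ ∘ inl = inl ∘ φ and Φ ∘ inr = inr). Then the fixed-point set {x ∈ G₁ ∗ G₂ : Φ(x) = x} equals the image of the canonical embedding inr : G₂ → G₁ ∗ G₂. -/

import Mathlib

open Monoid

private theorem list_map_eq_self {α : Type*} {f : α → α} :
    ∀ {l : List α}, List.map f l = l → ∀ a ∈ l, f a = a := by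
  intro l
  induction l with
  | nil => intro _ a ha; simp at ha
  | cons x t ih =>
    intro h a ha
    simp only [List.map_cons, List.cons.injEq] at h
    rcases List.mem_cons.mp ha with rfl | ha
    · exact h.1
    · exact ih h.2 a ha

section Core

variable {ι : Type*} {G : ι → Type*} [∀ i, Group (G i)]

/-- Core lemma: if `Ψ` acts letterwise via injective endomorphisms `ψ i`, then every letter of
the reduced word of a fixed point of `Ψ` is fixed by the corresponding `ψ i`. -/
private theorem coprodI_fixed_letters [DecidableEq ι] [∀ i, DecidableEq (G i)]
    (Ψ : Monoid.CoprodI G →* Monoid.CoprodI G) (ψ : ∀ i, G i →* G i)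
    (hinj : ∀ i, Function.Injective (ψ i))
    (hcompat : ∀ (i) (g : G i), Ψ (Monoid.CoprodI.of g) = Monoid.CoprodI.of (ψ i g))
    (x : Monoid.CoprodI G) (hx : Ψ x = x) :
    ∀ l ∈ (Monoid.CoprodI.Word.equiv x).toList, ψ l.1 l.2 = l.2 := by
  have hprodinj : Function.Injective
      (Monoid.CoprodI.Word.prod : Monoid.CoprodI.Word G → Monoid.CoprodI G) :=
    (Monoid.CoprodI.Word.equiv (M := G)).symm.injective
  set w : Monoid.CoprodI.Word G := Monoid.CoprodI.Word.equiv x with hw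
  have hxw : w.prod = x := (Monoid.CoprodI.Word.equiv (M := G)).left_inv x
  set f : (Σ i, G i) → (Σ i, G i) := fun l => ⟨l.1, ψ l.1 l.2⟩ with hf
  let w' : Monoid.CoprodI.Word G :=
    { toList := w.toList.map f
      ne_one := by
        intro l hl
        rcases List.mem_map.mp hl with ⟨a, ha, rfl⟩
        have h1 : a.2 ≠ 1 := w.ne_one a ha
        show (ψ a.1) a.2 ≠ 1
        simpa [hf, map_eq_one_iff (ψ a.1) (hinj a.1)] using h1
      chain_ne := by
        rw [List.isChain_map]
        exact w.chain_ne }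
  have hprod : w'.prod = Ψ w.prod := by
    show (List.map (fun l => Monoid.CoprodI.of l.snd) (w.toList.map f)).prod
        = Ψ (List.map (fun l => Monoid.CoprodI.of l.snd) w.toList).prod
    rw [← List.prod_hom _ Ψ, List.map_map, List.map_map]
    congr 1
    apply List.map_congr_left
    intro a _
    simp only [Function.comp_apply, hf]
    exact (hcompat a.1 a.2).symm
  have hww : w' = w := by
    apply hprodinj
    rw [hprod, hxw, hx, ← hxw]
  have hlist : w.toList.map f = w.toList := congrArg Monoid.CoprodI.Word.toList hww
  intro l hl
  have h := list_map_eq_self hlist l hl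
  have h2 := (Sigma.mk.inj_iff.mp h).2
  exact eq_of_heq h2

end Core

section BoolCase

universe u v

variable {G₁ : Type u} {G₂ : Type v} [Group G₁] [Group G₂]

private def F (G₁ : Type u) (G₂ : Type v) : Bool → Type (max u v)
  | true => ULift G₁
  | false => ULift G₂

private instance : ∀ b, Group (F G₁ G₂ b)
  | true => inferInstanceAs (Group (ULift G₁))
  | false => inferInstanceAs (Group (ULift G₂))

private def toI : Coprod G₁ G₂ →* Monoid.CoprodI (F G₁ G₂) :=
  Coprod.lift
    ((Monoid.CoprodI.of (i := true)).comp
      (MulEquiv.ulift (α := G₁)).symm.toMonoidHom)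
    ((Monoid.CoprodI.of (i := false)).comp
      (MulEquiv.ulift (α := G₂)).symm.toMonoidHom)

private def fromIfun : ∀ b, F G₁ G₂ b →* Coprod G₁ G₂
  | true => (Coprod.inl : G₁ →* Coprod G₁ G₂).comp (MulEquiv.ulift (α := G₁)).toMonoidHom
  | false => (Coprod.inr : G₂ →* Coprod G₁ G₂).comp (MulEquiv.ulift (α := G₂)).toMonoidHom

private def fromI : Monoid.CoprodI (F G₁ G₂) →* Coprod G₁ G₂ :=
  Monoid.CoprodI.lift fromIfun

private theorem fromI_toI (x : Coprod G₁ G₂) : fromI (toI x) = x := by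
  have h : (fromI.comp toI : Coprod G₁ G₂ →* Coprod G₁ G₂) = MonoidHom.id _ := by
    apply Coprod.hom_ext <;> ext g <;>
      simp only [MonoidHom.comp_apply, MonoidHom.id_apply, toI, fromI, fromIfun,
        Coprod.lift_apply_inl, Coprod.lift_apply_inr, Monoid.CoprodI.lift_of,
        MulEquiv.coe_toMonoidHom, MulEquiv.apply_symm_apply] <;> rfl
  calc fromI (toI x) = (fromI.comp toI) x := rfl
    _ = x := by rw [h]; rfl

private theorem toI_inl (g : G₁) :
    toI (Coprod.inl g : Coprod G₁ G₂) = Monoid.CoprodI.of (i := true) (ULift.up g) := by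
  simp [toI, Coprod.lift_apply_inl]
  rfl

private theorem toI_inr (g : G₂) :
    toI (Coprod.inr g : Coprod G₁ G₂) = Monoid.CoprodI.of (i := false) (ULift.up g) := by
  simp [toI, Coprod.lift_apply_inr]
  rfl

private theorem fromI_of_true (g : ULift G₁) :
    fromI (Monoid.CoprodI.of (M := F G₁ G₂) (i := true) g) = Coprod.inl g.down := by
  simp only [fromI, Monoid.CoprodI.lift_of, fromIfun, MonoidHom.comp_apply,
    MulEquiv.coe_toMonoidHom]
  rfl

private theorem fromI_of_false (g : ULift G₂) :
    fromI (Monoid.CoprodI.of (M := F G₁ G₂) (i := false) g) = Coprod.inr g.down := by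
  simp only [fromI, Monoid.CoprodI.lift_of, fromIfun, MonoidHom.comp_apply,
    MulEquiv.coe_toMonoidHom]
  rfl

private def psifun (φ : G₁ ≃* G₁) : ∀ b, F G₁ G₂ b →* F G₁ G₂ b
  | true =>
    ((MulEquiv.ulift (α := G₁)).symm.toMonoidHom.comp φ.toMonoidHom).comp
      (MulEquiv.ulift (α := G₁)).toMonoidHom
  | false => MonoidHom.id (ULift G₂)

end BoolCase

/-- identification used in the proof of Theorem 3.4. Let `φ` be an
automorphism of `G₁` with no nontrivial fixed points, and let `Φ` be the endomorphism of
the free product `G₁ ∗ G₂` induced by `φ` on the first factor and the identity on the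
second factor. Then the fixed-point set of `Φ` is exactly the image of the canonical
embedding `inr : G₂ → G₁ ∗ G₂`. -/
theorem free_joinings_stmt13
    {G₁ G₂ : Type*} [Group G₁] [Group G₂] (φ : G₁ ≃* G₁)
    (hφ : ∀ g : G₁, g ≠ 1 → φ g ≠ g)
    (Φ : Coprod G₁ G₂ →* Coprod G₁ G₂)
    (hl : ∀ g : G₁, Φ (Coprod.inl g) = Coprod.inl (φ g))
    (hr : ∀ g : G₂, Φ (Coprod.inr g) = Coprod.inr g) :
    {x : Coprod G₁ G₂ | Φ x = x} =
      Set.range (Coprod.inr : G₂ →* Coprod G₁ G₂) := by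
  classical
  ext x
  simp only [Set.mem_setOf_eq, Set.mem_range]
  constructor
  · intro hx
    set Ψ : Monoid.CoprodI (F G₁ G₂) →* Monoid.CoprodI (F G₁ G₂) :=
      (toI.comp Φ).comp fromI with hΨ
    have hcompat : ∀ (b) (g : F G₁ G₂ b),
        Ψ (Monoid.CoprodI.of g) = Monoid.CoprodI.of (psifun φ b g) := by
      intro b g
      cases b
      · show toI (Φ (fromI (Monoid.CoprodI.of (i := false) g))) = _
        rw [show fromI (Monoid.CoprodI.of (i := false) g) = Coprod.inr g.down from fromI_of_false g, hr, toI_inr]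
        rfl
      · show toI (Φ (fromI (Monoid.CoprodI.of (i := true) g))) = _
        rw [show fromI (Monoid.CoprodI.of (i := true) g) = Coprod.inl g.down from fromI_of_true g, hl, toI_inl]
        rfl
    have hinj : ∀ b, Function.Injective (psifun (G₂ := G₂) φ b) := by
      intro b; cases b
      · exact fun a b h => h
      · intro a b h
        exact ULift.down_injective (φ.injective (congrArg ULift.down h))
    have hfix : Ψ (toI x) = toI x := by
      show toI (Φ (fromI (toI x))) = toI x
      rw [fromI_toI, hx]
    have hletters := coprodI_fixed_letters Ψ (psifun φ) hinj hcompat (toI x) hfix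
    set w := Monoid.CoprodI.Word.equiv (toI x) with hw
    have hxw : w.prod = toI x := (Monoid.CoprodI.Word.equiv).left_inv (toI x)
    have hfalse : ∀ l ∈ w.toList, l.1 = false := by
      intro l hl'
      by_contra hcon
      have hb : l.1 = true := by simpa using hcon
      have h1 : l.2 ≠ 1 := w.ne_one l hl'
      have hfixl := hletters l hl'
      rcases l with ⟨b, g⟩
      dsimp at hb
      subst hb
      apply hφ g.down
      · intro hg1
        apply h1
        apply ULift.down_injective
        exact hg1
      · have : (ULift.up (φ g.down) : ULift G₁) = g := hfixl
        exact congrArg ULift.down this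
    have hlen : w.toList = [] ∨ ∃ l, w.toList = [l] := by
      rcases hlist : w.toList with _ | ⟨a, _ | ⟨b, t⟩⟩
      · exact Or.inl rfl
      · exact Or.inr ⟨a, rfl⟩
      · exfalso
        have hch := w.chain_ne
        rw [hlist] at hch
        have hab := (List.isChain_cons_cons.mp hch).1
        have ha : a.1 = false := hfalse a (by rw [hlist]; simp)
        have hb : b.1 = false := hfalse b (by rw [hlist]; simp)
        exact hab (ha.trans hb.symm)
    rcases hlen with h | ⟨l, h⟩
    · refine ⟨1, ?_⟩
      have hp1 : w.prod = 1 := by simp [Monoid.CoprodI.Word.prod, h]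
      have hx1 : toI x = 1 := by rw [← hxw, hp1]
      have h2 := congrArg fromI hx1
      rw [fromI_toI] at h2
      simpa using h2.symm
    · have hlf : l.1 = false := hfalse l (by rw [h]; simp)
      rcases l with ⟨b, g⟩
      dsimp at hlf
      subst hlf
      refine ⟨g.down, ?_⟩
      have hpw : w.prod = Monoid.CoprodI.of (i := false) g := by
        simp [Monoid.CoprodI.Word.prod, h]
      have hxo : toI x = Monoid.CoprodI.of (i := false) g := by rw [← hxw, hpw]
      have h2 := congrArg fromI hxo
      rw [fromI_toI, show fromI (Monoid.CoprodI.of (i := false) g) = Coprod.inr g.down from fromI_of_false g] at h2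
      exact h2.symm
  · rintro ⟨g, rfl⟩
    exact hr g
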